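/- For the transition system Prog (as defined), there is no inductive invariant given as a finite union of convex subsets of the state space ℚ^6 that is integer-closed; i.e., no set I that is a finite union of convex sets, contains all initial states, is closed under transitions, and is contained in the safety property (pc=3 → y2=2y1). -/

import Mathlib

structure ProgState where
  pc : ℤ
  x : ℤ
  z1 : ℤ
  z2 : ℤ
  y1 : ℤ
  y2 : ℤ

def ProgInit (s : ProgState) : Prop :=
  s.pc = 0 ∧ 0 < s.x ∧ s.z1 = s.x ∧ s.z2 = 2 * s.x ∧ s.y1 = 0 ∧ s.y2 = 0

def ProgStep (s t : ProgState) : Prop :=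
  ((s.pc = 0 ∨ s.pc = 1) ∧ 0 < s.z1 ∧
    t.pc = 1 ∧ t.x = s.x ∧ t.z1 = s.z1 - 1 ∧ t.z2 = s.z2 ∧ t.y1 = s.y1 + s.x ∧ t.y2 = s.y2) ∨
  ((s.pc = 0 ∨ s.pc = 1) ∧ s.z1 ≤ 0 ∧
    t.pc = 2 ∧ t.x = s.x ∧ t.z1 = s.z1 ∧ t.z2 = s.z2 ∧ t.y1 = s.y1 ∧ t.y2 = s.y2) ∨
  (s.pc = 2 ∧ 0 < s.z2 ∧
    t.pc = 2 ∧ t.x = s.x ∧ t.z1 = s.z1 ∧ t.z2 = s.z2 - 1 ∧ t.y1 = s.y1 ∧ t.y2 = s.y2 + s.x) ∨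
  (s.pc = 2 ∧ s.z2 ≤ 0 ∧
    t.pc = 3 ∧ t.x = s.x ∧ t.z1 = s.z1 ∧ t.z2 = s.z2 ∧ t.y1 = s.y1 ∧ t.y2 = s.y2)

def ProgReachable (s : ProgState) : Prop :=
  ∃ s0 : ProgState, ProgInit s0 ∧ Relation.ReflTransGen ProgStep s0 s

noncomputable def embQ (s : ProgState) : Fin 6 → ℚ :=
  ![(s.pc : ℚ), (s.x : ℚ), (s.z1 : ℚ), (s.z2 : ℚ), (s.y1 : ℚ), (s.y2 : ℚ)]

theorem stmt_14 :
    ¬ ∃ (r : ℕ) (C : Fin r → Set (Fin 6 → ℚ)),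
      (∀ i, Convex ℚ (C i)) ∧
      (∀ s : ProgState, ProgInit s → embQ s ∈ ⋃ i, C i) ∧
      (∀ s t : ProgState, embQ s ∈ ⋃ i, C i → ProgStep s t → embQ t ∈ ⋃ i, C i) ∧
      (∀ s : ProgState, embQ s ∈ ⋃ i, C i → s.pc = 3 → s.y2 = 2 * s.y1) := by
  rintro ⟨r, C, hconv, hinit, hstep, hsafe⟩
  set I : Set (Fin 6 → ℚ) := ⋃ i, C i with hI
  -- run the first loop to completion
  have reach1 : ∀ n : ℕ, ∀ s : ProgState, embQ s ∈ I → (s.pc = 0 ∨ s.pc = 1) →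
      s.z1 = (n : ℤ) → embQ ⟨2, s.x, 0, s.z2, s.y1 + (n : ℤ) * s.x, s.y2⟩ ∈ I := by
    intro n
    induction n with
    | zero =>
      intro s hs hpc hz
      have e1 : s.z1 = 0 := by exact_mod_cast hz
      have hmem := hstep s ⟨2, s.x, s.z1, s.z2, s.y1, s.y2⟩ hs
        (Or.inr (Or.inl ⟨hpc, by omega, rfl, rfl, rfl, rfl, rfl, rfl⟩))
      have ht : (⟨2, s.x, 0, s.z2, s.y1 + ((0:ℕ) : ℤ) * s.x, s.y2⟩ : ProgState)
          = ⟨2, s.x, s.z1, s.z2, s.y1, s.y2⟩ := by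
        simp [e1]
      rw [ht]; exact hmem
    | succ n ih =>
      intro s hs hpc hz
      have h1 : 0 < s.z1 := by omega
      have hs' : embQ ⟨1, s.x, s.z1 - 1, s.z2, s.y1 + s.x, s.y2⟩ ∈ I :=
        hstep s _ hs (Or.inl ⟨hpc, h1, rfl, rfl, rfl, rfl, rfl, rfl⟩)
      have hmem := ih ⟨1, s.x, s.z1 - 1, s.z2, s.y1 + s.x, s.y2⟩ hs' (Or.inr rfl)
        (by simp; omega)
      have e2 : s.y1 + ((n + 1 : ℕ) : ℤ) * s.x = s.y1 + s.x + (n : ℤ) * s.x := by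
        push_cast; ring
      rw [e2]
      simpa using hmem
  -- run the second loop to completion
  have reach2 : ∀ n : ℕ, ∀ s : ProgState, embQ s ∈ I → s.pc = 2 →
      s.z2 = (n : ℤ) → embQ ⟨3, s.x, s.z1, 0, s.y1, s.y2 + (n : ℤ) * s.x⟩ ∈ I := by
    intro n
    induction n with
    | zero =>
      intro s hs hpc hz
      have e1 : s.z2 = 0 := by exact_mod_cast hz
      have hmem := hstep s ⟨3, s.x, s.z1, s.z2, s.y1, s.y2⟩ hs
        (Or.inr (Or.inr (Or.inr ⟨hpc, by omega, rfl, rfl, rfl, rfl, rfl, rfl⟩)))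
      have ht : (⟨3, s.x, s.z1, 0, s.y1, s.y2 + ((0:ℕ) : ℤ) * s.x⟩ : ProgState)
          = ⟨3, s.x, s.z1, s.z2, s.y1, s.y2⟩ := by
        simp [e1]
      rw [ht]; exact hmem
    | succ n ih =>
      intro s hs hpc hz
      have h1 : 0 < s.z2 := by omega
      have hs' : embQ ⟨2, s.x, s.z1, s.z2 - 1, s.y1, s.y2 + s.x⟩ ∈ I :=
        hstep s _ hs (Or.inr (Or.inr (Or.inl ⟨hpc, h1, rfl, rfl, rfl, rfl, rfl, rfl⟩)))
      have hmem := ih ⟨2, s.x, s.z1, s.z2 - 1, s.y1, s.y2 + s.x⟩ hs' rfl (by simp; omega)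
      have e2 : s.y2 + ((n + 1 : ℕ) : ℤ) * s.x = s.y2 + s.x + (n : ℤ) * s.x := by
        push_cast; ring
      rw [e2]
      simpa using hmem
  -- states reached just before the second loop
  have key : ∀ a : ℤ, 0 < a → embQ ⟨2, a, 0, 2 * a, a * a, 0⟩ ∈ I := by
    intro a ha
    have h0 : embQ ⟨0, a, a, 2 * a, 0, 0⟩ ∈ I :=
      hinit ⟨0, a, a, 2 * a, 0, 0⟩ ⟨rfl, ha, rfl, rfl, rfl, rfl⟩
    have hmem := reach1 a.toNat ⟨0, a, a, 2 * a, 0, 0⟩ h0 (Or.inl rfl)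
      (by simp [Int.toNat_of_nonneg ha.le])
    have e : (0 : ℤ) + (a.toNat : ℤ) * a = a * a := by
      rw [Int.toNat_of_nonneg ha.le]; ring
    rwa [e] at hmem
  -- pigeonhole over the convex pieces
  have hx : ∀ k : Fin (r + 1), ∃ i : Fin r,
      embQ ⟨2, 2 * ((k : ℤ) + 1), 0, 2 * (2 * ((k : ℤ) + 1)),
        (2 * ((k : ℤ) + 1)) * (2 * ((k : ℤ) + 1)), 0⟩ ∈ C i := by
    intro k
    have := key (2 * ((k : ℤ) + 1)) (by positivity)
    rw [hI] at this
    simpa using this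
  choose g hg using hx
  obtain ⟨k, k', hkk, hgk⟩ := Fintype.exists_ne_map_eq_of_card_lt g (by simp)
  set a : ℤ := (k : ℤ) + 1 with ha
  set b : ℤ := (k' : ℤ) + 1 with hb
  have hab : a ≠ b := by
    simp only [ha, hb]
    intro h
    exact hkk (by ext; omega)
  have hu : embQ ⟨2, a + b, 0, 2 * (a + b), 2 * (a * a) + 2 * (b * b), 0⟩ ∈ C (g k) := by
    have hmid : embQ ⟨2, a + b, 0, 2 * (a + b), 2 * (a * a) + 2 * (b * b), 0⟩
        = (1/2 : ℚ) • embQ ⟨2, 2 * a, 0, 2 * (2 * a), (2 * a) * (2 * a), 0⟩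
          + (1/2 : ℚ) • embQ ⟨2, 2 * b, 0, 2 * (2 * b), (2 * b) * (2 * b), 0⟩ := by
      simp only [embQ, Matrix.smul_cons, Matrix.smul_empty, Matrix.cons_add_cons,
        Matrix.empty_add_empty]
      simp only [Matrix.vecCons, Fin.cons_inj, smul_eq_mul]
      refine ⟨by norm_num, by push_cast; ring, by norm_num, by push_cast; ring,
        by push_cast; ring, by norm_num, trivial⟩
    rw [hmid]
    exact hconv (g k) (hg k) (hgk ▸ hg k') (by norm_num) (by norm_num) (by norm_num)
  have huI : embQ ⟨2, a + b, 0, 2 * (a + b), 2 * (a * a) + 2 * (b * b), 0⟩ ∈ I :=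
    Set.mem_iUnion.mpr ⟨g k, hu⟩
  have hab0 : (0 : ℤ) < a + b := by simp only [ha, hb]; positivity
  have hN : ((2 * (a + b)).toNat : ℤ) = 2 * (a + b) := Int.toNat_of_nonneg (by omega)
  have hfin := reach2 (2 * (a + b)).toNat ⟨2, a + b, 0, 2 * (a + b),
      2 * (a * a) + 2 * (b * b), 0⟩ huI rfl (by simp [hN])
  have hsf := hsafe _ hfin rfl
  simp only [hN] at hsf
  -- hsf : 0 + 2*(a+b)*(a+b) = 2*(2*(a*a)+2*(b*b))
  rcases lt_or_gt_of_ne hab with h | h <;> nlinarith [hsf]
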